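/- Let k be a commutative ring, A a commutative k-algebra, and a ∈ A ⊗_k A an element satisfying a · τ(a) = 1, where τ is the flip algebra automorphism of A ⊗_k A. Let M be an A-module, so that M ⊗_k M is a module over A ⊗_k A. Define R : M ⊗_k M → M ⊗_k M as the composite of the flip m ⊗ n ↦ n ⊗ m with the action of a. Then: (1) R ∘ R = id; (2) R satisfies the quantum Yang–Baxter relation R₁R₂R₁ = R₂R₁R₂ on M ⊗ M ⊗ M, where R₁ = R ⊗ id_M and R₂ = id_M ⊗ R; and (3) the image μ(a) of a under the multiplication map μ : A ⊗_k A → A satisfies μ(a)² = 1. -/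

import Mathlib

open TensorProduct

noncomputable section

variable (k : Type u) [CommRing k] (A : Type v) [CommRing A] [Algebra k A]
variable (M : Type w) [AddCommGroup M] [Module k M] [Module A M] [IsScalarTower k A M]

/-- The action of an element `z ∈ A ⊗[k] A` on `M ⊗[k] M`, where `x ⊗ y` acts by
`m ⊗ n ↦ (x • m) ⊗ (y • n)`. -/
def tensorSquareAction : A ⊗[k] A →ₗ[k] (M ⊗[k] M →ₗ[k] M ⊗[k] M) :=
  TensorProduct.homTensorHomMap (RingHom.id k) M M M M
    ∘ₗ TensorProduct.map (Algebra.lsmul k k M).toLinearMap (Algebra.lsmul k k M).toLinearMap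

/-- The map `R(A,a,M) : M ⊗[k] M → M ⊗[k] M`: the flip `m ⊗ n ↦ n ⊗ m` followed by the
action of `a ∈ A ⊗[k] A`. -/
def Rmat (a : A ⊗[k] A) : M ⊗[k] M →ₗ[k] M ⊗[k] M :=
  tensorSquareAction k A M a ∘ₗ (TensorProduct.comm k M M).toLinearMap

lemma tsa_tmul (x y : A) : tensorSquareAction k A M (x ⊗ₜ[k] y)
    = TensorProduct.map (Algebra.lsmul k k M x) (Algebra.lsmul k k M y) := by
  simp [tensorSquareAction]

lemma Rmat_tmul (x y : A) (m n : M) :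
    Rmat k A M (x ⊗ₜ[k] y) (m ⊗ₜ[k] n) = (x • n) ⊗ₜ[k] (y • m) := by
  simp [Rmat, tsa_tmul]

lemma Rmat_add (z w : A ⊗[k] A) :
    Rmat k A M (z + w) = Rmat k A M z + Rmat k A M w := by
  simp [Rmat, LinearMap.add_comp]

lemma Rmat_zero : Rmat k A M (0 : A ⊗[k] A) = 0 := by
  simp [Rmat]

lemma Rmat_comp (z w : A ⊗[k] A) :
    Rmat k A M z ∘ₗ Rmat k A M w
      = tensorSquareAction k A M (z * (Algebra.TensorProduct.comm k A A) w) := by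
  induction z using TensorProduct.induction_on with
  | zero => simp [Rmat_zero]
  | add z₁ z₂ h1 h2 =>
      simp only [Rmat_add, LinearMap.add_comp, h1, h2, add_mul, map_add]
  | tmul x y =>
      induction w using TensorProduct.induction_on with
      | zero => simp [Rmat_zero]
      | add w₁ w₂ h1 h2 =>
          simp only [Rmat_add, LinearMap.comp_add, h1, h2, mul_add, map_add]
      | tmul x' y' =>
          apply TensorProduct.ext'
          intro m n
          simp [Rmat_tmul, Algebra.TensorProduct.tmul_mul_tmul, tsa_tmul, mul_smul]

lemma tsa_one : tensorSquareAction k A M (1 : A ⊗[k] A) = LinearMap.id := by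
  rw [Algebra.TensorProduct.one_def, tsa_tmul]
  ext m n
  simp

def R1 (z : A ⊗[k] A) : (M ⊗[k] M) ⊗[k] M →ₗ[k] (M ⊗[k] M) ⊗[k] M :=
  (Rmat k A M z).rTensor M

def R2 (z : A ⊗[k] A) : (M ⊗[k] M) ⊗[k] M →ₗ[k] (M ⊗[k] M) ⊗[k] M :=
  (TensorProduct.assoc k M M M).symm.toLinearMap
    ∘ₗ (Rmat k A M z).lTensor M ∘ₗ (TensorProduct.assoc k M M M).toLinearMap

lemma R1_add (z w : A ⊗[k] A) : R1 k A M (z + w) = R1 k A M z + R1 k A M w := by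
  simp [R1, Rmat_add, LinearMap.rTensor_add]

lemma R1_zero : R1 k A M (0 : A ⊗[k] A) = 0 := by
  simp [R1, Rmat_zero]

lemma R2_add (z w : A ⊗[k] A) : R2 k A M (z + w) = R2 k A M z + R2 k A M w := by
  simp [R2, Rmat_add, LinearMap.lTensor_add, LinearMap.add_comp, LinearMap.comp_add]

lemma R2_zero : R2 k A M (0 : A ⊗[k] A) = 0 := by
  simp [R2, Rmat_zero]

lemma qyb (z w v : A ⊗[k] A) :
    R1 k A M z ∘ₗ R2 k A M w ∘ₗ R1 k A M v
      = R2 k A M v ∘ₗ R1 k A M w ∘ₗ R2 k A M z := by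
  induction z using TensorProduct.induction_on with
  | zero => simp [R1_zero, R2_zero]
  | add z₁ z₂ h1 h2 =>
      simp only [R1_add, R2_add, LinearMap.add_comp, LinearMap.comp_add, h1, h2]
  | tmul x y =>
    induction w using TensorProduct.induction_on with
    | zero => simp [R1_zero, R2_zero]
    | add w₁ w₂ h1 h2 =>
        simp only [R1_add, R2_add, LinearMap.add_comp, LinearMap.comp_add, h1, h2]
    | tmul x' y' =>
      induction v using TensorProduct.induction_on with
      | zero => simp [R1_zero, R2_zero]
      | add v₁ v₂ h1 h2 =>
          simp only [R1_add, R2_add, LinearMap.add_comp, LinearMap.comp_add, h1, h2]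
      | tmul x'' y'' =>
        apply TensorProduct.ext_threefold
        intro m n p
        simp [R1, R2, Rmat_tmul, smul_smul, mul_comm]

lemma mul'_mul (z w : A ⊗[k] A) :
    LinearMap.mul' k A (z * w) = LinearMap.mul' k A z * LinearMap.mul' k A w := by
  induction z using TensorProduct.induction_on with
  | zero => simp
  | add z₁ z₂ h1 h2 => simp [add_mul, h1, h2]
  | tmul x y =>
    induction w using TensorProduct.induction_on with
    | zero => simp
    | add w₁ w₂ h1 h2 => simp [mul_add, h1, h2]
    | tmul x' y' =>
        simp only [Algebra.TensorProduct.tmul_mul_tmul, LinearMap.mul'_apply]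
        ring

lemma mul'_comm_eq (z : A ⊗[k] A) :
    LinearMap.mul' k A ((Algebra.TensorProduct.comm k A A) z) = LinearMap.mul' k A z := by
  induction z using TensorProduct.induction_on with
  | zero => simp
  | add z₁ z₂ h1 h2 => simp [h1, h2]
  | tmul x y => simp [mul_comm]

/-- for a commutative `k`-algebra `A`, an element `a ∈ A ⊗ A` with `a·τ(a) = 1`,
and an `A`-module `M`, the map `R = L(a) ∘ flip` on `M ⊗ M` satisfies `R² = id` and the quantum
Yang-Baxter relation, and `μ(a)² = 1`. -/
theorem unitary_R_matrix_from_commutative_algebra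
    (a : A ⊗[k] A) (ha : a * (Algebra.TensorProduct.comm k A A) a = 1) :
    (Rmat k A M a ∘ₗ Rmat k A M a = LinearMap.id) ∧
    ((Rmat k A M a).rTensor M
        ∘ₗ ((TensorProduct.assoc k M M M).symm.toLinearMap
              ∘ₗ (Rmat k A M a).lTensor M ∘ₗ (TensorProduct.assoc k M M M).toLinearMap)
        ∘ₗ (Rmat k A M a).rTensor M
      = ((TensorProduct.assoc k M M M).symm.toLinearMap
              ∘ₗ (Rmat k A M a).lTensor M ∘ₗ (TensorProduct.assoc k M M M).toLinearMap)
        ∘ₗ (Rmat k A M a).rTensor M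
        ∘ₗ ((TensorProduct.assoc k M M M).symm.toLinearMap
              ∘ₗ (Rmat k A M a).lTensor M ∘ₗ (TensorProduct.assoc k M M M).toLinearMap)) ∧
    (LinearMap.mul' k A a) ^ 2 = 1 := by
  refine ⟨?_, ?_, ?_⟩
  · rw [Rmat_comp, ha, tsa_one]
  · exact qyb k A M a a a
  · rw [pow_two]
    calc LinearMap.mul' k A a * LinearMap.mul' k A a
        = LinearMap.mul' k A a * LinearMap.mul' k A ((Algebra.TensorProduct.comm k A A) a) := by
          rw [mul'_comm_eq]
      _ = LinearMap.mul' k A (a * (Algebra.TensorProduct.comm k A A) a) := (mul'_mul k A _ _).symm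
      _ = 1 := by rw [ha]; simp [Algebra.TensorProduct.one_def]

end
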